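/- Cellwise point-value approximation estimate (Lemma 8.2, q = 2, for smooth representatives): Let d ∈ {2, 3} and let Λ ⊂ ℝ^d be a bounded set. There exists a constant C > 0, depending only on d and Λ, such that for every compact convex set K contained in the closure of Λ, every point y ∈ K, and every twice continuously differentiable function u : ℝ^d → ℝ, one has ∫_K |u(x) − u(y)|² dx ≤ C · (diam K)² · ∫_K ( |u(x)|² + ‖∇u(x)‖² + ‖D²u(x)‖² ) dx. -/

import Mathlib

open MeasureTheory Pointwise

lemma setIntegral_le_sqrt_mul_sqrt' {α : Type*} [MeasurableSpace α] (μ : Measure α)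
    (s : Set α) (hs : MeasurableSet s) (hμ : μ s ≠ ⊤) (f : α → ℝ)
    (hfi : IntegrableOn f s μ)
    (hfi2 : IntegrableOn (fun x => f x ^ 2) s μ) :
    ∫ x in s, f x ∂μ ≤ Real.sqrt (μ s).toReal * Real.sqrt (∫ x in s, f x ^ 2 ∂μ) := by
  set V := (μ s).toReal with hV
  set N := ∫ x in s, f x ^ 2 ∂μ with hN
  have hV0 : 0 ≤ V := ENNReal.toReal_nonneg
  have hN0 : 0 ≤ N := setIntegral_nonneg hs fun x _ => sq_nonneg _
  rcases eq_or_lt_of_le hN0 with hNz | hNpos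
  · have h2 : 0 ≤ᵐ[μ.restrict s] fun x => f x ^ 2 := .of_forall fun x => sq_nonneg _
    have hsq : (fun x => f x ^ 2) =ᵐ[μ.restrict s] 0 :=
      (integral_eq_zero_iff_of_nonneg_ae h2 hfi2).mp hNz.symm
    have hf0' : f =ᵐ[μ.restrict s] 0 := by
      filter_upwards [hsq] with x hx
      simpa [pow_eq_zero_iff] using hx
    have : ∫ x in s, f x ∂μ = 0 := by
      rw [integral_congr_ae hf0']; simp
    rw [this]
    positivity
  · rcases eq_or_lt_of_le hV0 with hVz | hVpos
    · have hμ0 : μ s = 0 := by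
        have := ENNReal.toReal_eq_zero_iff (μ s)
        rw [← hV, ← hVz] at this
        exact (this.mp rfl).resolve_right hμ
      rw [Measure.restrict_eq_zero.mpr hμ0]
      simp
      positivity
    · set ε := Real.sqrt N / Real.sqrt V with hε
      have hsV : (0:ℝ) < Real.sqrt V := Real.sqrt_pos.mpr hVpos
      have hsN : (0:ℝ) < Real.sqrt N := Real.sqrt_pos.mpr hNpos
      have hεpos : 0 < ε := div_pos hsN hsV
      have key : ∫ x in s, f x ∂μ ≤ ∫ x in s, (ε / 2 + f x ^ 2 / (2 * ε)) ∂μ := by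
        refine setIntegral_mono_on hfi ?_ hs ?_
        · exact (integrableOn_const hμ).add
            (hfi2.div_const _)
        · intro x _
          rw [div_add_div _ _ (two_ne_zero) (by positivity), le_div_iff₀ (by positivity)]
          nlinarith [sq_nonneg (f x - ε)]
      have heval : ∫ x in s, (ε / 2 + f x ^ 2 / (2 * ε)) ∂μ
          = ε / 2 * V + N / (2 * ε) := by
        rw [integral_add (integrableOn_const (C := ε / 2) hμ) (hfi2.div_const _),
          setIntegral_const, integral_div]
        rw [smul_eq_mul, measureReal_def, ← hV]
        ring
      have : ε / 2 * V + N / (2 * ε) = Real.sqrt V * Real.sqrt N := by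
        rw [hε]
        have hVs : Real.sqrt V * Real.sqrt V = V := Real.mul_self_sqrt hV0
        have hNs : Real.sqrt N * Real.sqrt N = N := Real.mul_self_sqrt hN0
        field_simp
        nlinarith [hVs, hNs]
      linarith [key, heval.le, heval.ge]

lemma taylor_integral' {E : Type*} [NormedAddCommGroup E] [NormedSpace ℝ E]
    (u : E → ℝ) (hu : ContDiff ℝ 2 u) (x z : E) :
    u z - u x - fderiv ℝ u x (z - x)
      = ∫ t in (0:ℝ)..1,
          (1 - t) * (fderiv ℝ (fderiv ℝ u) (x + t • (z - x)) (z - x) (z - x)) := by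
  have hu1 : ContDiff ℝ 1 (fderiv ℝ u) := hu.fderiv_right (by norm_num)
  have hud : Differentiable ℝ u := hu.differentiable two_ne_zero
  have hud1 : Differentiable ℝ (fderiv ℝ u) := hu1.differentiable one_ne_zero
  set v := z - x with hv
  set γ : ℝ → E := fun t => x + t • v with hγ
  have hγd : ∀ t : ℝ, HasDerivAt γ v t := by
    intro t
    exact (by simpa using ((hasDerivAt_id t).smul_const v) : HasDerivAt (fun s : ℝ => s • v) v t).const_add x
  set g : ℝ → ℝ := fun t => u (γ t) + (1 - t) * (fderiv ℝ u (γ t) v) with hg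
  have hgd : ∀ t : ℝ, HasDerivAt g ((1 - t) * (fderiv ℝ (fderiv ℝ u) (γ t) v v)) t := by
    intro t
    have h1 : HasDerivAt (fun t => u (γ t)) (fderiv ℝ u (γ t) v) t :=
      (hud (γ t)).hasFDerivAt.comp_hasDerivAt t (hγd t)
    have h2 : HasDerivAt (fun t => fderiv ℝ u (γ t)) (fderiv ℝ (fderiv ℝ u) (γ t) v) t :=
      (hud1 (γ t)).hasFDerivAt.comp_hasDerivAt t (hγd t)
    have h3 : HasDerivAt (fun t => (fderiv ℝ u (γ t)) v)
        (fderiv ℝ (fderiv ℝ u) (γ t) v v) t := by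
      simpa using h2.clm_apply (hasDerivAt_const t v)
    have h4 : HasDerivAt (fun t : ℝ => (1 - t)) (-1) t := by
      simpa using (hasDerivAt_id t).const_sub 1
    have := h1.add (h4.mul h3)
    exact this.congr_deriv (by ring)
  have hcont : Continuous fun t : ℝ =>
      (1 - t) * (fderiv ℝ (fderiv ℝ u) (γ t) v v) := by
    have hc2 : Continuous (fderiv ℝ (fderiv ℝ u)) := hu1.continuous_fderiv one_ne_zero
    have hγc : Continuous γ := by fun_prop
    exact (continuous_const.sub continuous_id).mul
      (((hc2.comp hγc).clm_apply continuous_const).clm_apply continuous_const)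
  have hInt := intervalIntegral.integral_eq_sub_of_hasDerivAt
    (fun t _ => hgd t) (hcont.intervalIntegrable 0 1)
  rw [hInt, hg]
  have hγ1 : γ 1 = z := by simp [hγ, hv]
  have hγ0 : γ 0 = x := by simp [hγ]
  simp only [hγ1, hγ0]
  ring

lemma setIntegral_comp_affine' {E : Type*} [NormedAddCommGroup E] [NormedSpace ℝ E]
    [MeasurableSpace E] [BorelSpace E] [FiniteDimensional ℝ E]
    (μ : Measure E) [μ.IsAddHaarMeasure] (f : E → ℝ) {c : ℝ} (hc : 0 < c) (a : E) (K : Set E) :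
    ∫ x in K, f (c • x + a) ∂μ
      = (c ^ Module.finrank ℝ E)⁻¹ * ∫ y in (fun w => c • w + a) '' K, f y ∂μ := by
  have h1 : ∫ x in K, (fun w => f (w + a)) (c • x) ∂μ
      = (c ^ Module.finrank ℝ E)⁻¹ • ∫ y in c • K, (fun w => f (w + a)) y ∂μ :=
    Measure.setIntegral_comp_smul_of_pos μ (fun w => f (w + a)) K hc
  simp only [smul_eq_mul] at h1
  rw [h1]
  congr 1
  have h2 := (measurePreserving_add_right μ a).setIntegral_image_emb
    (MeasurableEquiv.addRight a).measurableEmbedding f (c • K)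
  rw [← h2]
  congr 1
  rw [← Set.image_smul, Set.image_image]

set_option maxHeartbeats 1000000 in
lemma step1 {d : ℕ} (hd : d = 2 ∨ d = 3) (K : Set (EuclideanSpace ℝ (Fin d)))
    (hK : IsCompact K) (hKconv : Convex ℝ K)
    (u : EuclideanSpace ℝ (Fin d) → ℝ) (hu : ContDiff ℝ 2 u)
    (z : EuclideanSpace ℝ (Fin d)) (hz : z ∈ K) :
    |(volume K).toReal * u z - ∫ x in K, u x|
      ≤ Metric.diam K *
          (Real.sqrt (volume K).toReal * Real.sqrt (∫ x in K, ‖fderiv ℝ u x‖ ^ 2))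
        + 2 * Metric.diam K ^ 2 *
          (Real.sqrt (volume K).toReal * Real.sqrt (∫ x in K, ‖iteratedFDeriv ℝ 2 u x‖ ^ 2)) := by
  have hKm : MeasurableSet K := hK.measurableSet
  have hμK : volume K ≠ ⊤ := hK.measure_lt_top.ne
  set V : ℝ := (volume K).toReal with hVdef
  set Dk : ℝ := Metric.diam K with hDkdef
  have hDk0 : 0 ≤ Dk := Metric.diam_nonneg
  have hu1 : ContDiff ℝ 1 (fderiv ℝ u) := hu.fderiv_right (by norm_num)
  have hcu : Continuous u := hu.continuous
  have hc1 : Continuous (fderiv ℝ u) := hu1.continuous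
  have hc2 : Continuous (fderiv ℝ (fderiv ℝ u)) := hu1.continuous_fderiv one_ne_zero
  set g1 : EuclideanSpace ℝ (Fin d) → ℝ := fun x => ‖fderiv ℝ u x‖ with hg1def
  set g2 : EuclideanSpace ℝ (Fin d) → ℝ := fun x => ‖iteratedFDeriv ℝ 2 u x‖ with hg2def
  have hg1c : Continuous g1 := hc1.norm
  have hg2c : Continuous g2 := (hu.continuous_iteratedFDeriv le_rfl).norm
  set N1 : ℝ := Real.sqrt (∫ x in K, g1 x ^ 2) with hN1def
  set N2 : ℝ := Real.sqrt (∫ x in K, g2 x ^ 2) with hN2def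
  have hN20 : 0 ≤ N2 := Real.sqrt_nonneg _
  have hsV0 : 0 ≤ Real.sqrt V := Real.sqrt_nonneg _
  have hI2 : (0:ℝ) ≤ ∫ x in K, g2 x ^ 2 := setIntegral_nonneg hKm fun x _ => sq_nonneg _
  -- second derivative application bound
  have hDuApp : ∀ (w v : EuclideanSpace ℝ (Fin d)),
      |fderiv ℝ (fderiv ℝ u) w v v| ≤ g2 w * (‖v‖ * ‖v‖) := by
    intro w v
    have he : fderiv ℝ (fderiv ℝ u) w v v = iteratedFDeriv ℝ 2 u w ![v, v] := by
      rw [iteratedFDeriv_two_apply]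
      simp
    rw [he, ← Real.norm_eq_abs]
    calc ‖iteratedFDeriv ℝ 2 u w ![v, v]‖
        ≤ ‖iteratedFDeriv ℝ 2 u w‖ * ∏ i, ‖(![v, v] : Fin 2 → _) i‖ :=
          (iteratedFDeriv ℝ 2 u w).le_opNorm _
      _ = g2 w * (‖v‖ * ‖v‖) := by
          rw [Fin.prod_univ_two]
          simp [hg2def]
  -- the function F for Fubini
  set F : EuclideanSpace ℝ (Fin d) → ℝ → ℝ :=
    fun x t => (1 - t) * g2 ((1 - t) • x + t • z) with hFdef
  have hFcont : Continuous (Function.uncurry F) := by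
    apply ((continuous_const.sub continuous_snd).mul _)
    exact hg2c.comp (((continuous_const.sub continuous_snd).smul continuous_fst).add
      (continuous_snd.smul continuous_const))
  have hFint : Integrable (Function.uncurry F)
      ((volume.restrict K).prod (volume.restrict (Set.Icc (0:ℝ) 1))) := by
    rw [Measure.prod_restrict]
    exact hFcont.continuousOn.integrableOn_compact (hK.prod isCompact_Icc)
  set W : EuclideanSpace ℝ (Fin d) → ℝ := fun x => ∫ t in Set.Icc (0:ℝ) 1, F x t with hWdef
  have hWint : IntegrableOn W K volume := hFint.integral_prod_left
  have hswap : ∫ x in K, W x = ∫ t in Set.Icc (0:ℝ) 1, ∫ x in K, F x t :=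
    integral_integral_swap hFint
  -- per-t estimate
  have hPer : ∀ t ∈ Set.Icc (0:ℝ) 1,
      (∫ x in K, F x t) ≤ Real.sqrt V * N2 * Real.sqrt (1 - t)⁻¹ := by
    intro t ⟨ht0, ht1⟩
    rcases eq_or_lt_of_le ht1 with h1 | h1
    · have : ∀ x, F x t = 0 := by intro x; simp [hFdef, ← h1]
      rw [integral_congr_ae (Filter.Eventually.of_forall this)]
      simp [← h1]
    · set c : ℝ := 1 - t with hcdef
      have hc : 0 < c := by simp [hcdef]; linarith
      have hc1 : c ≤ 1 := by simp [hcdef]; linarith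
      have haffK : (fun w => c • w + t • z) '' K ⊆ K := by
        rintro _ ⟨w, hw, rfl⟩
        exact hKconv hw hz hc.le ht0 (by simp [hcdef])
      have hcomp : ∫ x in K, (g2 (c • x + t • z)) ^ 2
          = (c ^ d)⁻¹ * ∫ x in (fun w => c • w + t • z) '' K, g2 x ^ 2 := by
        have := setIntegral_comp_affine' (volume) (fun w => g2 w ^ 2) hc (t • z) K
        rwa [finrank_euclideanSpace_fin] at this
      have hsub : ∫ x in (fun w => c • w + t • z) '' K, g2 x ^ 2 ≤ ∫ x in K, g2 x ^ 2 := by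
        apply setIntegral_mono_set ((hg2c.pow 2).continuousOn.integrableOn_compact hK)
        · exact Filter.Eventually.of_forall fun x => sq_nonneg _
        · exact Filter.Eventually.of_forall haffK
      have hcd : (0:ℝ) < (c ^ d)⁻¹ := by positivity
      have hCS : ∫ x in K, g2 (c • x + t • z)
          ≤ Real.sqrt V * Real.sqrt ((c ^ d)⁻¹ * ∫ x in K, g2 x ^ 2) := by
        have h := setIntegral_le_sqrt_mul_sqrt' volume K hKm hμK
          (fun x => g2 (c • x + t • z))
          ((hg2c.comp (by fun_prop)).continuousOn.integrableOn_compact hK)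
          (((hg2c.comp (by fun_prop)).pow 2).continuousOn.integrableOn_compact hK)
        refine h.trans ?_
        gcongr
        rw [hcomp]
        gcongr
      -- √((c^d)⁻¹ * I2) ≤ √(c⁻¹*c⁻¹*c⁻¹ ...) handle with c-power bound below
      have hFc : ∀ x, F x t = c * g2 (c • x + t • z) := fun x => rfl
      have hFint2 : ∫ x in K, F x t = c * ∫ x in K, g2 (c • x + t • z) := by
        simp only [hFc]
        exact integral_const_mul c _
      rw [hFint2]
      have hpow : c * Real.sqrt ((c ^ d)⁻¹ * ∫ x in K, g2 x ^ 2)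
          ≤ Real.sqrt (1 - t)⁻¹ * N2 := by
        rw [Real.sqrt_mul (by positivity), ← mul_assoc]
        rw [hN2def]
        gcongr
        have h3 : c ^ 3 ≤ c ^ d := by
          apply pow_le_pow_of_le_one hc.le hc1
          rcases hd with h | h <;> omega
        calc c * Real.sqrt (c ^ d)⁻¹ ≤ c * Real.sqrt (c ^ 3)⁻¹ := by
              gcongr
          _ = Real.sqrt (c * c * (c*c*c)⁻¹) := by
              rw [show c^3 = c*c*c by ring, Real.sqrt_mul (by positivity),
                Real.sqrt_mul_self hc.le]
          _ = Real.sqrt c⁻¹ := by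
              congr 1
              field_simp
          _ = Real.sqrt (1 - t)⁻¹ := by rw [hcdef]
      calc c * ∫ x in K, g2 (c • x + t • z)
          ≤ c * (Real.sqrt V * Real.sqrt ((c ^ d)⁻¹ * ∫ x in K, g2 x ^ 2)) := by
            gcongr
        _ = Real.sqrt V * (c * Real.sqrt ((c ^ d)⁻¹ * ∫ x in K, g2 x ^ 2)) := by ring
        _ ≤ Real.sqrt V * (Real.sqrt (1 - t)⁻¹ * N2) := by gcongr
        _ = Real.sqrt V * N2 * Real.sqrt (1 - t)⁻¹ := by ring
  -- integrability of the weight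
  have hrpow_int : IntegrableOn (fun t : ℝ => Real.sqrt (1 - t)⁻¹) (Set.Icc (0:ℝ) 1) := by
    have h0 : IntervalIntegrable (fun s : ℝ => s ^ (-(1/2) : ℝ)) volume 0 1 :=
      intervalIntegral.intervalIntegrable_rpow' (by norm_num)
    have h1 : IntervalIntegrable (fun t : ℝ => (1 - t) ^ (-(1/2) : ℝ)) volume 0 1 := by
      simpa using (h0.comp_sub_left 1).symm
    have h2 := (intervalIntegrable_iff_integrableOn_Icc_of_le
      (by norm_num : (0:ℝ) ≤ 1)).mp h1
    apply h2.congr_fun ?_ measurableSet_Icc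
    intro t ht
    show (1 - t) ^ (-(1/2) : ℝ) = Real.sqrt (1 - t)⁻¹
    rw [Real.rpow_neg (by linarith [ht.2]), ← Real.sqrt_eq_rpow, Real.sqrt_inv]
  have hval : ∫ t in Set.Icc (0:ℝ) 1, Real.sqrt (1 - t)⁻¹ = 2 := by
    rw [integral_Icc_eq_integral_Ioc,
      ← intervalIntegral.integral_of_le (by norm_num : (0:ℝ) ≤ 1)]
    have hcg : ∀ t ∈ Set.uIcc (0:ℝ) 1,
        Real.sqrt (1 - t)⁻¹ = (1 - t) ^ (-(1/2) : ℝ) := by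
      intro t ht
      rw [Set.uIcc_of_le (by norm_num : (0:ℝ) ≤ 1)] at ht
      rw [Real.rpow_neg (by linarith [ht.2]), ← Real.sqrt_eq_rpow, Real.sqrt_inv]
    rw [intervalIntegral.integral_congr hcg]
    have := intervalIntegral.integral_comp_sub_left (a := (0:ℝ)) (b := 1) (fun s : ℝ => s ^ (-(1/2) : ℝ)) 1
    norm_num at this
    rw [this, integral_rpow (Or.inl (by norm_num))]
    norm_num
  have hWbound : ∫ x in K, W x ≤ Real.sqrt V * N2 * 2 := by
    rw [hswap]
    have hle : ∫ t in Set.Icc (0:ℝ) 1, (∫ x in K, F x t)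
        ≤ ∫ t in Set.Icc (0:ℝ) 1, Real.sqrt V * N2 * Real.sqrt (1 - t)⁻¹ := by
      apply setIntegral_mono_on
      · exact hFint.integral_prod_right
      · exact hrpow_int.const_mul _
      · exact measurableSet_Icc
      · exact hPer
    refine hle.trans ?_
    rw [integral_const_mul, hval]
  -- Taylor remainder
  set A : EuclideanSpace ℝ (Fin d) → ℝ := fun x => fderiv ℝ u x (z - x) with hAdef
  set r : EuclideanSpace ℝ (Fin d) → ℝ := fun x => u z - u x - A x with hrdef
  have hAc : Continuous A := hc1.clm_apply (continuous_const.sub continuous_id)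
  have hrc : Continuous r := (continuous_const.sub hcu).sub hAc
  have hnorm : ∀ x ∈ K, ‖z - x‖ ≤ Dk := by
    intro x hx
    rw [← dist_eq_norm]
    exact Metric.dist_le_diam_of_mem hK.isBounded hz hx
  have haff : ∀ (t : ℝ) (x : EuclideanSpace ℝ (Fin d)),
      x + t • (z - x) = (1 - t) • x + t • z := by
    intro t x
    rw [smul_sub, sub_smul, one_smul]
    abel
  have hrbound : ∀ x ∈ K, |r x| ≤ Dk ^ 2 * W x := by
    intro x hx
    have hr : r x = ∫ t in (0:ℝ)..1,
        (1 - t) * (fderiv ℝ (fderiv ℝ u) (x + t • (z - x)) (z - x) (z - x)) :=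
      taylor_integral' u hu x z
    rw [hr]
    have hcont1 : Continuous fun t : ℝ =>
        (1 - t) * (fderiv ℝ (fderiv ℝ u) (x + t • (z - x)) (z - x) (z - x)) := by
      apply (continuous_const.sub continuous_id).mul
      exact ((hc2.comp (by fun_prop)).clm_apply continuous_const).clm_apply continuous_const
    have h1 : |∫ t in (0:ℝ)..1,
        (1 - t) * (fderiv ℝ (fderiv ℝ u) (x + t • (z - x)) (z - x) (z - x))|
        ≤ ∫ t in (0:ℝ)..1,
        |(1 - t) * (fderiv ℝ (fderiv ℝ u) (x + t • (z - x)) (z - x) (z - x))| :=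
      intervalIntegral.abs_integral_le_integral_abs (by norm_num)
    have h2 : ∫ t in (0:ℝ)..1,
        |(1 - t) * (fderiv ℝ (fderiv ℝ u) (x + t • (z - x)) (z - x) (z - x))|
        ≤ ∫ t in (0:ℝ)..1, Dk ^ 2 * ((1 - t) * g2 ((1 - t) • x + t • z)) := by
      apply intervalIntegral.integral_mono_on (by norm_num)
      · exact hcont1.abs.intervalIntegrable 0 1
      · apply Continuous.intervalIntegrable
        apply continuous_const.mul
        apply (continuous_const.sub continuous_id).mul
        exact hg2c.comp (by fun_prop)
      · intro t ⟨ht0, ht1⟩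
        rw [abs_mul, abs_of_nonneg (by linarith : (0:ℝ) ≤ 1 - t)]
        rw [← haff t x]
        calc (1 - t) * |fderiv ℝ (fderiv ℝ u) (x + t • (z - x)) (z - x) (z - x)|
            ≤ (1 - t) * (g2 (x + t • (z - x)) * (‖z - x‖ * ‖z - x‖)) := by
              gcongr
              exact hDuApp _ _
          _ ≤ (1 - t) * (g2 (x + t • (z - x)) * (Dk * Dk)) := by
              have hg20 : 0 ≤ g2 (x + t • (z - x)) := norm_nonneg _
              have h := hnorm x hx
              apply mul_le_mul_of_nonneg_left _ (by linarith : (0:ℝ) ≤ 1 - t)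
              apply mul_le_mul_of_nonneg_left _ hg20
              exact mul_le_mul h h (norm_nonneg _) hDk0
          _ = Dk ^ 2 * ((1 - t) * g2 (x + t • (z - x))) := by ring
    have h3 : ∫ t in (0:ℝ)..1, Dk ^ 2 * ((1 - t) * g2 ((1 - t) • x + t • z))
        = Dk ^ 2 * W x := by
      rw [intervalIntegral.integral_const_mul]
      congr 1
      rw [intervalIntegral.integral_of_le (by norm_num : (0:ℝ) ≤ 1),
        ← integral_Icc_eq_integral_Ioc]
    linarith
  -- assembling
  have hconst_int : IntegrableOn (fun _ : EuclideanSpace ℝ (Fin d) => u z) K volume :=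
    integrableOn_const hK.measure_lt_top.ne
  have hu_int : IntegrableOn u K volume := hcu.continuousOn.integrableOn_compact hK
  have hA_int : IntegrableOn A K volume := hAc.continuousOn.integrableOn_compact hK
  have hr_int : IntegrableOn r K volume := hrc.continuousOn.integrableOn_compact hK
  have hg1_int : IntegrableOn g1 K volume := hg1c.continuousOn.integrableOn_compact hK
  have e1 : V * u z - ∫ x in K, u x = (∫ x in K, A x) + ∫ x in K, r x := by
    have h1 : (∫ x in K, A x) + ∫ x in K, r x = ∫ x in K, (A x + r x) :=
      (integral_add hA_int hr_int).symm
    have h2 : ∫ x in K, (A x + r x) = ∫ x in K, (u z - u x) := by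
      apply integral_congr_ae
      apply Filter.Eventually.of_forall
      intro x
      show A x + (u z - u x - A x) = u z - u x
      ring
    have h3 : ∫ x in K, (u z - u x) = V * u z - ∫ x in K, u x := by
      rw [integral_sub hconst_int hu_int, setIntegral_const, smul_eq_mul]; rfl
    rw [h1, h2, h3]
  have hAbound : |∫ x in K, A x| ≤ Dk * (Real.sqrt V * N1) := by
    have h1 : |∫ x in K, A x| ≤ ∫ x in K, |A x| := by
      rw [← Real.norm_eq_abs]
      refine (norm_integral_le_integral_norm _).trans_eq ?_
      simp [Real.norm_eq_abs]
    have h2 : ∫ x in K, |A x| ≤ ∫ x in K, g1 x * Dk := by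
      apply setIntegral_mono_on (hAc.abs.continuousOn.integrableOn_compact hK)
        ((hg1c.mul continuous_const).continuousOn.integrableOn_compact hK) hKm
      intro x hx
      calc |A x| ≤ ‖fderiv ℝ u x‖ * ‖z - x‖ := by
            rw [← Real.norm_eq_abs]
            exact (fderiv ℝ u x).le_opNorm _
        _ ≤ g1 x * Dk := by
            gcongr
            exact hnorm x hx
    have h3 : ∫ x in K, g1 x * Dk ≤ Real.sqrt V * N1 * Dk := by
      rw [integral_mul_const]
      gcongr
      exact setIntegral_le_sqrt_mul_sqrt' volume K hKm hμK g1 hg1_int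
        ((hg1c.pow 2).continuousOn.integrableOn_compact hK)
    calc |∫ x in K, A x| ≤ ∫ x in K, |A x| := h1
      _ ≤ ∫ x in K, g1 x * Dk := h2
      _ ≤ Real.sqrt V * N1 * Dk := h3
      _ = Dk * (Real.sqrt V * N1) := by ring
  have hrbound2 : |∫ x in K, r x| ≤ 2 * Dk ^ 2 * (Real.sqrt V * N2) := by
    have h1 : |∫ x in K, r x| ≤ ∫ x in K, |r x| := by
      rw [← Real.norm_eq_abs]
      refine (norm_integral_le_integral_norm _).trans_eq ?_
      simp [Real.norm_eq_abs]
    have h2 : ∫ x in K, |r x| ≤ ∫ x in K, Dk ^ 2 * W x :=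
      setIntegral_mono_on (hrc.abs.continuousOn.integrableOn_compact hK)
        (hWint.const_mul _) hKm hrbound
    have h3 : ∫ x in K, Dk ^ 2 * W x ≤ Dk ^ 2 * (Real.sqrt V * N2 * 2) := by
      rw [integral_const_mul]
      gcongr
    calc |∫ x in K, r x| ≤ ∫ x in K, |r x| := h1
      _ ≤ ∫ x in K, Dk ^ 2 * W x := h2
      _ ≤ Dk ^ 2 * (Real.sqrt V * N2 * 2) := h3
      _ = 2 * Dk ^ 2 * (Real.sqrt V * N2) := by ring
  rw [e1]
  calc |(∫ x in K, A x) + ∫ x in K, r x|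
      ≤ |∫ x in K, A x| + |∫ x in K, r x| := abs_add_le _ _
    _ ≤ Dk * (Real.sqrt V * N1) + 2 * Dk ^ 2 * (Real.sqrt V * N2) :=
        add_le_add hAbound hrbound2

set_option maxHeartbeats 1000000 in
/-- Cellwise point-value approximation estimate (Lemma 8.2, q = 2,
for smooth representatives). -/
theorem cellwise_point_value_estimate
    (d : ℕ) (hd : d = 2 ∨ d = 3)
    (Λ : Set (EuclideanSpace ℝ (Fin d)))
    (hΛ : Bornology.IsBounded Λ) :
    ∃ C > (0 : ℝ),
      ∀ K : Set (EuclideanSpace ℝ (Fin d)),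
        IsCompact K → Convex ℝ K → K ⊆ closure Λ →
        ∀ y ∈ K, ∀ u : EuclideanSpace ℝ (Fin d) → ℝ, ContDiff ℝ 2 u →
          ∫ x in K, |u x - u y| ^ 2
            ≤ C * Metric.diam K ^ 2 *
              ∫ x in K,
                (|u x| ^ 2 + ‖fderiv ℝ u x‖ ^ 2 + ‖iteratedFDeriv ℝ 2 u x‖ ^ 2) := by
  set D := Metric.diam (closure Λ) with hDdef
  have hD0 : 0 ≤ D := Metric.diam_nonneg
  refine ⟨33 * (1 + D ^ 2), by positivity, ?_⟩
  intro K hK hKconv hKsub y hy u hu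
  have hKm : MeasurableSet K := hK.measurableSet
  set Dk := Metric.diam K with hDk
  have hDk0 : 0 ≤ Dk := Metric.diam_nonneg
  have hDkD : Dk ≤ D := Metric.diam_mono hKsub hΛ.closure
  have hcu : Continuous u := hu.continuous
  have hg1c : Continuous fun x => ‖fderiv ℝ u x‖ := (hu.continuous_fderiv two_ne_zero).norm
  have hg2c : Continuous fun x => ‖iteratedFDeriv ℝ 2 u x‖ :=
    (hu.continuous_iteratedFDeriv le_rfl).norm
  have hRHS0 : 0 ≤ ∫ x in K,
      (|u x| ^ 2 + ‖fderiv ℝ u x‖ ^ 2 + ‖iteratedFDeriv ℝ 2 u x‖ ^ 2) :=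
    setIntegral_nonneg hKm fun x _ => by positivity
  by_cases hV0 : volume K = 0
  · rw [Measure.restrict_eq_zero.mpr hV0]
    simp
  · have hμK : volume K ≠ ⊤ := hK.measure_lt_top.ne
    set V := (volume K).toReal with hV
    have hVpos : 0 < V := ENNReal.toReal_pos hV0 hμK
    set N1 := Real.sqrt (∫ x in K, ‖fderiv ℝ u x‖ ^ 2) with hN1
    set N2 := Real.sqrt (∫ x in K, ‖iteratedFDeriv ℝ 2 u x‖ ^ 2) with hN2
    have hN10 : 0 ≤ N1 := Real.sqrt_nonneg _
    have hN20 : 0 ≤ N2 := Real.sqrt_nonneg _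
    have hsV : 0 < Real.sqrt V := Real.sqrt_pos.mpr hVpos
    set M := (2 * Dk * N1 + 4 * Dk ^ 2 * N2) / Real.sqrt V with hM
    have hM0 : 0 ≤ M := by positivity
    have hptw : ∀ x ∈ K, |u x - u y| ≤ M := by
      intro x hx
      have h1 := step1 hd K hK hKconv u hu x hx
      have h2 := step1 hd K hK hKconv u hu y hy
      have hVsq : V = Real.sqrt V * Real.sqrt V := (Real.mul_self_sqrt hVpos.le).symm
      have habs : |(V * u x - ∫ w in K, u w) - (V * u y - ∫ w in K, u w)|
          = V * |u x - u y| := by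
        have he : (V * u x - ∫ w in K, u w) - (V * u y - ∫ w in K, u w)
            = V * (u x - u y) := by ring
        rw [he, abs_mul, abs_of_pos hVpos]
      have hthis : V * |u x - u y|
          ≤ 2 * Dk * (Real.sqrt V * N1) + 4 * Dk ^ 2 * (Real.sqrt V * N2) := by
        rw [← habs]
        calc |(V * u x - ∫ w in K, u w) - (V * u y - ∫ w in K, u w)|
            ≤ |V * u x - ∫ w in K, u w| + |V * u y - ∫ w in K, u w| := abs_sub _ _
          _ ≤ 2 * Dk * (Real.sqrt V * N1) + 4 * Dk ^ 2 * (Real.sqrt V * N2) := by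
              have := add_le_add h1 h2
              linarith
      have key : (|u x - u y| * Real.sqrt V) * Real.sqrt V
          ≤ (2 * Dk * N1 + 4 * Dk ^ 2 * N2) * Real.sqrt V := by
        calc (|u x - u y| * Real.sqrt V) * Real.sqrt V
            = V * |u x - u y| := by rw [mul_assoc, ← hVsq]; ring
          _ ≤ 2 * Dk * (Real.sqrt V * N1) + 4 * Dk ^ 2 * (Real.sqrt V * N2) := hthis
          _ = (2 * Dk * N1 + 4 * Dk ^ 2 * N2) * Real.sqrt V := by ring
      have hfin := le_of_mul_le_mul_right key hsV
      rw [hM, le_div_iff₀ hsV]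
      exact hfin
    have hmono : ∫ x in K, |u x - u y| ^ 2 ≤ ∫ _x in K, M ^ 2 := by
      apply setIntegral_mono_on
      · exact (((hcu.sub continuous_const).abs.pow 2)).continuousOn.integrableOn_compact hK
      · exact integrableOn_const hK.measure_lt_top.ne
      · exact hKm
      · intro x hx
        have h := hptw x hx
        have h0 : 0 ≤ |u x - u y| := abs_nonneg _
        nlinarith
    have hVM : V * M ^ 2 = (2 * Dk * N1 + 4 * Dk ^ 2 * N2) ^ 2 := by
      rw [hM, div_pow, Real.sq_sqrt hVpos.le]
      field_simp
    have hN1sq : N1 ^ 2 = ∫ x in K, ‖fderiv ℝ u x‖ ^ 2 :=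
      Real.sq_sqrt (setIntegral_nonneg hKm fun x _ => sq_nonneg _)
    have hN2sq : N2 ^ 2 = ∫ x in K, ‖iteratedFDeriv ℝ 2 u x‖ ^ 2 :=
      Real.sq_sqrt (setIntegral_nonneg hKm fun x _ => sq_nonneg _)
    have hintu : IntegrableOn (fun x => |u x| ^ 2) K volume :=
      (hcu.abs.pow 2).continuousOn.integrableOn_compact hK
    have hint1 : IntegrableOn (fun x => ‖fderiv ℝ u x‖ ^ 2) K volume :=
      (hg1c.pow 2).continuousOn.integrableOn_compact hK
    have hint2 : IntegrableOn (fun x => ‖iteratedFDeriv ℝ 2 u x‖ ^ 2) K volume :=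
      (hg2c.pow 2).continuousOn.integrableOn_compact hK
    have hsplit : N1 ^ 2 + N2 ^ 2
        ≤ ∫ x in K, (|u x| ^ 2 + ‖fderiv ℝ u x‖ ^ 2 + ‖iteratedFDeriv ℝ 2 u x‖ ^ 2) := by
      have hintall : IntegrableOn
          (fun x => |u x| ^ 2 + ‖fderiv ℝ u x‖ ^ 2 + ‖iteratedFDeriv ℝ 2 u x‖ ^ 2) K volume :=
        (((hcu.abs.pow 2).add (hg1c.pow 2)).add (hg2c.pow 2)).continuousOn.integrableOn_compact hK
      rw [hN1sq, hN2sq, ← integral_add hint1 hint2]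
      apply setIntegral_mono_on (hint1.add hint2) hintall hKm
      intro x hx
      simp only [Pi.add_apply]
      nlinarith [sq_nonneg (u x), sq_abs (u x)]
    calc ∫ x in K, |u x - u y| ^ 2
        ≤ ∫ _x in K, M ^ 2 := hmono
      _ = V * M ^ 2 := by rw [setIntegral_const, smul_eq_mul]; rfl
      _ = (2 * Dk * N1 + 4 * Dk ^ 2 * N2) ^ 2 := hVM
      _ ≤ 33 * (1 + D ^ 2) * Dk ^ 2 * (N1 ^ 2 + N2 ^ 2) := by
          nlinarith [sq_nonneg (2 * Dk * N1 - 4 * Dk ^ 2 * N2),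
            mul_le_mul hDkD hDkD hDk0 hD0,
            mul_nonneg (mul_nonneg hDk0 hDk0) (mul_nonneg hN20 hN20),
            mul_nonneg (mul_nonneg hDk0 hDk0) (mul_nonneg hN10 hN10),
            mul_nonneg hDk0 hN10, mul_nonneg hDk0 hN20,
            sq_nonneg (Dk * N2), sq_nonneg (Dk * N1), sq_nonneg (D * Dk * N2)]
      _ ≤ 33 * (1 + D ^ 2) * Dk ^ 2 *
            ∫ x in K, (|u x| ^ 2 + ‖fderiv ℝ u x‖ ^ 2 + ‖iteratedFDeriv ℝ 2 u x‖ ^ 2) := by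
          apply mul_le_mul_of_nonneg_left hsplit (by positivity)
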